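/- Under the same assumptions as the projective contraction result (kernels M_i with Doeblin-type constants γ_i = c_i d_{i+1}), for any k < n ≤ N and nonzero finite positive measures μ_1, μ_2, one has γ_{n-1} · | μ_1(m_{k,N})/μ_1(m_{k,n}) − μ_2(m_{k,N})/μ_2(m_{k,n}) | ≤ 2 (μ_2(m_{k,N})/μ_2(m_{k,n})) ∏_{i=k}^{n-1}(1−γ_i). -/

import Mathlib

open MeasureTheory ProbabilityTheory ENNReal

variable {X : Type*} [MeasurableSpace X]

noncomputable def seqApply (M : ℕ → Kernel X X) (k : ℕ) : ℕ → Measure X → Measure X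
  | 0, μ => μ
  | j + 1, μ => (seqApply M k j μ).bind (fun x => M (k + j) x)

lemma seqApply_succ_left (M : ℕ → Kernel X X) (k : ℕ) : ∀ (j : ℕ) (μ : Measure X),
    seqApply M k (j+1) μ = seqApply M (k+1) j (μ.bind (M k)) := by
  intro j
  induction j with
  | zero => intro μ; simp [seqApply]
  | succ j ih =>
      intro μ
      show (seqApply M k (j+1) μ).bind (fun x => M (k + (j+1)) x) = _
      rw [ih]
      have h : k + (j+1) = (k+1) + j := by omega
      rw [h]
      rfl

lemma seqApply_aux (M : ℕ → Kernel X X) : ∀ (j k : ℕ),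
    Measurable (fun x : X => (seqApply M k j (Measure.dirac x)) Set.univ) ∧
    ∀ μ : Measure X, (seqApply M k j μ) Set.univ
      = ∫⁻ x, (seqApply M k j (Measure.dirac x)) Set.univ ∂μ := by
  intro j
  induction j with
  | zero =>
      intro k
      constructor
      · simpa [seqApply] using measurable_const
      · intro μ; simp [seqApply]
  | succ j ih =>
      intro k
      have key : ∀ μ : Measure X, (seqApply M k (j+1) μ) Set.univ
          = ∫⁻ y, ∫⁻ x, (seqApply M (k+1) j (Measure.dirac x)) Set.univ ∂(M k y) ∂μ := by
        intro μ
        rw [seqApply_succ_left, (ih (k+1)).2,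
          Measure.lintegral_bind (M k).measurable.aemeasurable (ih (k+1)).1.aemeasurable]
      have hG : Measurable fun y =>
          ∫⁻ x, (seqApply M (k+1) j (Measure.dirac x)) Set.univ ∂(M k y) :=
        (Measure.measurable_lintegral (ih (k+1)).1).comp (M k).measurable
      have hdir : ∀ y : X, (seqApply M k (j+1) (Measure.dirac y)) Set.univ
          = ∫⁻ x, (seqApply M (k+1) j (Measure.dirac x)) Set.univ ∂(M k y) := by
        intro y; rw [key, lintegral_dirac' _ hG]
      constructor
      · simpa [hdir] using hG
      · intro μ
        rw [key]
        exact lintegral_congr fun y => (hdir y).symm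

lemma seqApply_dirac_succ (M : ℕ → Kernel X X) (k j : ℕ) (x : X) :
    (seqApply M k (j+1) (Measure.dirac x)) Set.univ
      = ∫⁻ y, (seqApply M (k+1) j (Measure.dirac y)) Set.univ ∂(M k x) := by
  rw [seqApply_succ_left, Measure.dirac_bind (M k).measurable, (seqApply_aux M j (k+1)).2]

lemma seqApply_comp (M : ℕ → Kernel X X) : ∀ (j₂ j₁ k : ℕ) (μ : Measure X),
    seqApply M k (j₁ + j₂) μ = seqApply M (k + j₁) j₂ (seqApply M k j₁ μ) := by
  intro j₂
  induction j₂ with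
  | zero => intro j₁ k μ; rfl
  | succ j₂ ih =>
      intro j₁ k μ
      show (seqApply M k (j₁ + j₂) μ).bind (fun x => M (k + (j₁ + j₂)) x)
        = (seqApply M (k+j₁) j₂ (seqApply M k j₁ μ)).bind (fun x => M ((k + j₁) + j₂) x)
      rw [ih, Nat.add_assoc]

lemma seqApply_bound (M : ℕ → Kernel X X) (hfin : ∀ i, IsFiniteKernel (M i)) :
    ∀ (j k : ℕ), ∃ C : ℝ≥0∞, C ≠ ∞ ∧
      ∀ x : X, (seqApply M k j (Measure.dirac x)) Set.univ ≤ C := by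
  intro j
  induction j with
  | zero => intro k; exact ⟨1, one_ne_top, fun x => by simp [seqApply]⟩
  | succ j ih =>
      intro k
      obtain ⟨C, hC, hle⟩ := ih (k+1)
      refine ⟨C * Kernel.bound (M k),
        ENNReal.mul_ne_top hC (Kernel.bound_lt_top (M k)).ne, fun x => ?_⟩
      rw [seqApply_dirac_succ]
      calc ∫⁻ y, (seqApply M (k+1) j (Measure.dirac y)) Set.univ ∂(M k x)
          ≤ ∫⁻ _, C ∂(M k x) := lintegral_mono hle
        _ = C * (M k x) Set.univ := lintegral_const C
        _ ≤ C * Kernel.bound (M k) :=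
            mul_le_mul_right (Kernel.measure_le_bound (M k) x Set.univ) C

lemma osc_pair {α : Type*} [MeasurableSpace α] (P Q E : Measure α)
    [IsProbabilityMeasure P] [IsProbabilityMeasure Q] [IsProbabilityMeasure E]
    (γ : ℝ≥0∞) (hγ : γ ≤ 1)
    (hP : ∀ f : α → ℝ≥0∞, Measurable f → γ * ∫⁻ x, f x ∂E ≤ ∫⁻ x, f x ∂P)
    (hQ : ∀ f : α → ℝ≥0∞, Measurable f → γ * ∫⁻ x, f x ∂E ≤ ∫⁻ x, f x ∂Q)
    (h : α → ℝ≥0∞) (hh : Measurable h) :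
    ∫⁻ x, h x ∂P - ∫⁻ x, h x ∂Q ≤ (1 - γ) * ((⨆ x, h x) - ⨅ x, h x) := by
  set t := ⨅ x, h x with ht
  set s := ⨆ x, h x with hs
  by_cases htop : t = ∞
  · have hht : ∀ x, h x = ∞ := fun x => top_le_iff.mp (htop ▸ iInf_le h x)
    have h1 : ∫⁻ x, h x ∂P = ∫⁻ x, h x ∂Q := by
      simp [lintegral_congr hht, lintegral_const]
    rw [h1, tsub_self]
    exact zero_le
  -- t finite
  rw [tsub_le_iff_right]
  have htx : ∀ x, t ≤ h x := fun x => iInf_le h x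
  have hsx : ∀ x, h x ≤ s := fun x => le_iSup h x
  -- truncation
  have htrunc : ∀ x, h x = ⨆ B : ℕ, min (h x) (t + B) := by
    intro x
    refine le_antisymm ?_ (iSup_le fun B => min_le_left _ _)
    by_cases hx : h x = ∞
    · rw [hx, top_le_iff, iSup_eq_top]
      intro b hb
      obtain ⟨n, hn⟩ := ENNReal.exists_nat_gt hb.ne
      refine ⟨n, ?_⟩
      rw [min_eq_right le_top]
      exact lt_of_lt_of_le hn le_add_self
    · obtain ⟨n, hn⟩ := ENNReal.exists_nat_gt hx
      have h1 : min (h x) (t + n) = h x := min_eq_left (le_trans hn.le le_add_self)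
      exact le_trans h1.ge (le_iSup (fun B : ℕ => min (h x) (t + B)) n)
  have hmeas : ∀ B : ℕ, Measurable fun x => min (h x) (t + B) :=
    fun B => hh.min measurable_const
  have hmono : Monotone fun (B : ℕ) (x : α) => min (h x) (t + B) := by
    intro B1 B2 hB x
    exact min_le_min le_rfl (add_le_add le_rfl (by exact_mod_cast Nat.cast_le.mpr hB))
  have hPsup : ∫⁻ x, h x ∂P = ⨆ B : ℕ, ∫⁻ x, min (h x) (t + B) ∂P := by
    rw [← lintegral_iSup hmeas hmono]
    exact lintegral_congr htrunc
  rw [hPsup]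
  refine iSup_le fun B => ?_
  -- fixed truncation level
  set h' := fun x => min (h x) (t + B) with hh'
  have hth' : ∀ x, t ≤ h' x := fun x => le_min (htx x) le_self_add
  set u := min (s - t) (B : ℝ≥0∞) with hu
  have hu_top : u ≠ ∞ := ((min_le_right _ _).trans_lt (by simp)).ne
  have hud : ∀ x, h' x - t ≤ u := by
    intro x
    refine le_min (tsub_le_tsub_right ((min_le_left _ _).trans (hsx x)) t) ?_
    rw [tsub_le_iff_right, add_comm]
    exact min_le_right _ _
  have hmeas' : Measurable h' := hh.min measurable_const
  have hmeasd : Measurable fun x => h' x - t := hmeas'.sub measurable_const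
  have hmeasu : Measurable fun x => u - (h' x - t) := measurable_const.sub hmeasd
  have hsplit : ∀ (μ : Measure α), IsProbabilityMeasure μ →
      ∫⁻ x, h' x ∂μ = ∫⁻ x, (h' x - t) ∂μ + t := by
    intro μ hμ
    have h1 : ∀ x, h' x = (h' x - t) + t := fun x => (tsub_add_cancel_of_le (hth' x)).symm
    rw [lintegral_congr h1, lintegral_add_right _ measurable_const, lintegral_const,
      measure_univ, mul_one]
  have hsplit2 : ∀ (μ : Measure α), IsProbabilityMeasure μ →
      ∫⁻ x, (h' x - t) ∂μ + ∫⁻ x, (u - (h' x - t)) ∂μ = u := by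
    intro μ hμ
    rw [← lintegral_add_left hmeasd]
    have h1 : ∀ x, (h' x - t) + (u - (h' x - t)) = u :=
      fun x => add_tsub_cancel_of_le (hud x)
    rw [lintegral_congr h1, lintegral_const, measure_univ, mul_one]
  set e := ∫⁻ x, (h' x - t) ∂E with he
  have heu : e ≤ u := by
    rw [he]
    calc ∫⁻ x, (h' x - t) ∂E ≤ ∫⁻ _, u ∂E := lintegral_mono hud
      _ = u := by rw [lintegral_const, measure_univ, mul_one]
  have h2 : ∫⁻ x, (u - (h' x - t)) ∂E = u - e := by
    refine ENNReal.eq_sub_of_add_eq (ne_of_lt (lt_of_le_of_lt heu hu_top.lt_top)) ?_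
    rw [add_comm]
    exact hsplit2 E inferInstance
  have hA3 : ∫⁻ x, (h' x - t) ∂P ≤ u - γ * (u - e) := by
    have h1 : ∫⁻ x, (h' x - t) ∂P = u - ∫⁻ x, (u - (h' x - t)) ∂P := by
      refine ENNReal.eq_sub_of_add_eq ?_ (hsplit2 P inferInstance)
      refine ne_of_lt (lt_of_le_of_lt ?_ hu_top.lt_top)
      calc ∫⁻ x, (u - (h' x - t)) ∂P ≤ ∫⁻ _, u ∂P := lintegral_mono fun x => tsub_le_self
        _ = u := by rw [lintegral_const, measure_univ, mul_one]
    rw [h1]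
    exact tsub_le_tsub_left (h2 ▸ hP _ hmeasu) u
  have hA5 : u - γ * (u - e) ≤ (1 - γ) * u + γ * e := by
    rw [tsub_le_iff_right]
    calc u = 1 * u := (one_mul u).symm
      _ = ((1 - γ) + γ) * u := by rw [tsub_add_cancel_of_le hγ]
      _ = (1 - γ) * u + γ * u := add_mul _ _ _
      _ = (1 - γ) * u + γ * ((u - e) + e) := by rw [tsub_add_cancel_of_le heu]
      _ = (1 - γ) * u + (γ * (u - e) + γ * e) := by rw [mul_add]
      _ ≤ (1 - γ) * u + γ * e + γ * (u - e) := le_of_eq (by ring)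
  have hA6 : γ * e + t ≤ ∫⁻ x, h x ∂Q := by
    calc γ * e + t ≤ ∫⁻ x, (h' x - t) ∂Q + t := add_le_add_left (hQ _ hmeasd) t
      _ = ∫⁻ x, h' x ∂Q := (hsplit Q inferInstance).symm
      _ ≤ ∫⁻ x, h x ∂Q := lintegral_mono fun x => min_le_left _ _
  calc ∫⁻ x, h' x ∂P = ∫⁻ x, (h' x - t) ∂P + t := hsplit P inferInstance
    _ ≤ (u - γ * (u - e)) + t := add_le_add_left hA3 t
    _ ≤ ((1 - γ) * u + γ * e) + t := add_le_add_left hA5 t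
    _ = (1 - γ) * u + (γ * e + t) := add_assoc _ _ _
    _ ≤ (1 - γ) * (s - t) + ∫⁻ x, h x ∂Q :=
        add_le_add (mul_le_mul_right (min_le_left _ _) _) hA6

noncomputable def mfn (M : ℕ → Kernel X X) (a b : ℕ) (x : X) : ℝ≥0∞ :=
  (seqApply M a (b - a) (Measure.dirac x)) Set.univ

lemma mfn_meas (M : ℕ → Kernel X X) (a b : ℕ) : Measurable (mfn M a b) :=
  (seqApply_aux M (b - a) a).1

lemma mfn_self (M : ℕ → Kernel X X) (a : ℕ) (x : X) : mfn M a a x = 1 := by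
  simp [mfn, seqApply]

lemma mfn_rec (M : ℕ → Kernel X X) (a b : ℕ) (x : X) (hab : a < b) :
    mfn M a b x = ∫⁻ y, mfn M (a+1) b y ∂(M a x) := by
  unfold mfn
  have h1 : b - a = (b - (a+1)) + 1 := by omega
  rw [h1, seqApply_dirac_succ]

lemma mfn_step (M : ℕ → Kernel X X) (a : ℕ) (x : X) :
    mfn M a (a+1) x = (M a x) Set.univ := by
  rw [mfn_rec M a (a+1) x (Nat.lt_succ_self a)]
  simp [mfn_self]

lemma mfn_bdd (M : ℕ → Kernel X X) (hfin : ∀ i, IsFiniteKernel (M i)) (a b : ℕ) :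
    ∃ C : ℝ≥0∞, C ≠ ∞ ∧ ∀ x, mfn M a b x ≤ C :=
  seqApply_bound M hfin (b - a) a

lemma mfn_integral (M : ℕ → Kernel X X) (a b : ℕ) (μ : Measure X) :
    (seqApply M a (b - a) μ) Set.univ = ∫⁻ x, mfn M a b x ∂μ :=
  (seqApply_aux M (b - a) a).2 μ

lemma mfn_integral2 (M : ℕ → Kernel X X) (a b e : ℕ) (hab : a ≤ b) (hbe : b ≤ e)
    (μ : Measure X) :
    (seqApply M a (e - a) μ) Set.univ = ∫⁻ x, mfn M b e x ∂(seqApply M a (b - a) μ) := by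
  have h1 : e - a = (b - a) + (e - b) := by omega
  have h2 : a + (b - a) = b := by omega
  rw [h1, seqApply_comp, h2]
  exact mfn_integral M b e _

theorem growth_ratio_contraction
    (M : ℕ → Kernel X X) (hfin : ∀ i, IsFiniteKernel (M i))
    (hpos : ∀ k j (x : X), 0 < (seqApply M k j (Measure.dirac x)) Set.univ)
    (c : ℕ → ℝ≥0∞) (hc : ∀ k, c k ≤ 1)
    (ν : ℕ → Measure X) (hν : ∀ k, IsProbabilityMeasure (ν k))
    (hmin : ∀ k x (f : X → ℝ≥0∞), Measurable f →
      c k * ((M k x) Set.univ) * ∫⁻ y, f y ∂(ν k) ≤ ∫⁻ y, f y ∂(M k x))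
    (d : ℕ → ℝ≥0∞) (hd : ∀ k, d k ≤ 1)
    (hmaj : ∀ k j,
      d (k + 1) * (⨆ x : X, (seqApply M (k + 1) j (Measure.dirac x)) Set.univ)
        ≤ ∫⁻ x, (seqApply M (k + 1) j (Measure.dirac x)) Set.univ ∂(ν k)) :
    ∀ (k n N : ℕ), k < n → n ≤ N → ∀ (μ₁ μ₂ : Measure X),
      IsFiniteMeasure μ₁ → IsFiniteMeasure μ₂ → μ₁ ≠ 0 → μ₂ ≠ 0 →
      (c (n - 1) * d n) *
        (((seqApply M k (N - k) μ₁) Set.univ / (seqApply M k (n - k) μ₁) Set.univ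
            - (seqApply M k (N - k) μ₂) Set.univ / (seqApply M k (n - k) μ₂) Set.univ)
          + ((seqApply M k (N - k) μ₂) Set.univ / (seqApply M k (n - k) μ₂) Set.univ
            - (seqApply M k (N - k) μ₁) Set.univ / (seqApply M k (n - k) μ₁) Set.univ))
        ≤ 2 * ((seqApply M k (N - k) μ₂) Set.univ / (seqApply M k (n - k) μ₂) Set.univ)
            * ∏ i ∈ Finset.Ico k n, (1 - c i * d (i + 1)) := by
  intro k n N hkn hnN μ₁ μ₂ hfm₁ hfm₂ hne₁ hne₂
  have hn1 : n - 1 + 1 = n := by omega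
  -- basic facts about mfn
  have mfnPos : ∀ a b x, 0 < mfn M a b x := fun a b x => hpos a (b - a) x
  have mfnTop : ∀ a b x, mfn M a b x ≠ ∞ := by
    intro a b x
    obtain ⟨C, hC, hle⟩ := mfn_bdd M hfin a b
    exact ((hle x).trans_lt hC.lt_top).ne
  set g : ℕ → X → ℝ≥0∞ := fun i x => mfn M i N x / mfn M i n x with hg
  have gMeas : ∀ i, Measurable (g i) := fun i => (mfn_meas M i N).div (mfn_meas M i n)
  set D : ℕ → ℝ≥0∞ := fun i => (⨆ x, g i x) - ⨅ x, g i x with hD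
  -- oscillation contraction step
  have oscstep : ∀ i, i < n → D i ≤ (1 - c i * d (i+1)) * D (i+1) := by
    intro i hi
    have hiN : i < N := lt_of_lt_of_le hi hnN
    have hγ1 : c i * d (i+1) ≤ 1 := mul_le_one' (hc i) (hd (i+1))
    have wmeas : Measurable (mfn M (i+1) n) := mfn_meas M (i+1) n
    have hmrec : ∀ x, mfn M i n x = ∫⁻ y, mfn M (i+1) n y ∂(M i x) :=
      fun x => mfn_rec M i n x hi
    have hmNrec : ∀ x, mfn M i N x = ∫⁻ y, mfn M (i+1) N y ∂(M i x) :=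
      fun x => mfn_rec M i N x hiN
    set Iw := ∫⁻ y, mfn M (i+1) n y ∂(ν i) with hIw
    have hIw0 : Iw ≠ 0 := by
      rw [hIw]
      have := (lintegral_pos_iff_support wmeas (μ := ν i)).2
      refine (this ?_).ne'
      have hsupp : Function.support (mfn M (i+1) n) = Set.univ :=
        Set.eq_univ_of_forall fun y => Function.mem_support.mpr (mfnPos (i+1) n y).ne'
      rw [hsupp, measure_univ]
      exact zero_lt_one
    have hIwtop : Iw ≠ ∞ := by
      obtain ⟨C, hC, hle⟩ := mfn_bdd M hfin (i+1) n
      rw [hIw]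
      refine ne_of_lt ?_
      calc ∫⁻ y, mfn M (i+1) n y ∂(ν i) ≤ ∫⁻ _, C ∂(ν i) := lintegral_mono hle
        _ = C := by rw [lintegral_const, measure_univ, mul_one]
        _ < ∞ := hC.lt_top
    set P : X → Measure X := fun x => (mfn M i n x)⁻¹ • ((M i x).withDensity (mfn M (i+1) n))
      with hP
    set E : Measure X := Iw⁻¹ • ((ν i).withDensity (mfn M (i+1) n)) with hE
    have intP : ∀ (x : X) (f : X → ℝ≥0∞), Measurable f →
        ∫⁻ y, f y ∂(P x) = (mfn M i n x)⁻¹ * ∫⁻ y, mfn M (i+1) n y * f y ∂(M i x) := by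
      intro x f hf
      rw [hP]
      simp only [lintegral_smul_measure]
      rw [lintegral_withDensity_eq_lintegral_mul _ wmeas hf]
      simp [Pi.mul_apply]
    have intE : ∀ (f : X → ℝ≥0∞), Measurable f →
        ∫⁻ y, f y ∂E = Iw⁻¹ * ∫⁻ y, mfn M (i+1) n y * f y ∂(ν i) := by
      intro f hf
      rw [hE]
      simp only [lintegral_smul_measure]
      rw [lintegral_withDensity_eq_lintegral_mul _ wmeas hf]
      simp [Pi.mul_apply]
    have probP : ∀ x, IsProbabilityMeasure (P x) := by
      intro x
      constructor
      rw [← lintegral_one, intP x _ measurable_const]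
      simp only [mul_one]
      rw [← hmrec x]
      exact ENNReal.inv_mul_cancel (mfnPos i n x).ne' (mfnTop i n x)
    have probE : IsProbabilityMeasure E := by
      constructor
      rw [← lintegral_one, intE _ measurable_const]
      simp only [mul_one]
      rw [← hIw]
      exact ENNReal.inv_mul_cancel hIw0 hIwtop
    have minor : ∀ (x : X) (f : X → ℝ≥0∞), Measurable f →
        (c i * d (i+1)) * ∫⁻ y, f y ∂E ≤ ∫⁻ y, f y ∂(P x) := by
      intro x f hf
      rw [intP x f hf, intE f hf]
      set J := ∫⁻ y, mfn M (i+1) n y * f y ∂(ν i) with hJ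
      have hmin' : c i * ((M i x) Set.univ) * J ≤ ∫⁻ y, mfn M (i+1) n y * f y ∂(M i x) :=
        hmin i x _ (wmeas.mul hf)
      have hkey : d (i+1) * mfn M i n x ≤ (M i x) Set.univ * Iw := by
        calc d (i+1) * mfn M i n x = d (i+1) * ∫⁻ y, mfn M (i+1) n y ∂(M i x) := by
              rw [hmrec]
          _ ≤ d (i+1) * ∫⁻ _, (⨆ y, mfn M (i+1) n y) ∂(M i x) :=
              mul_le_mul_right (lintegral_mono fun y => le_iSup _ y) _
          _ = (M i x) Set.univ * (d (i+1) * ⨆ y, mfn M (i+1) n y) := by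
              rw [lintegral_const]; ring
          _ ≤ (M i x) Set.univ * Iw := mul_le_mul_right (hmaj i (n - (i+1))) _
      refine le_trans ?_ (mul_le_mul_right hmin' _)
      have h2 := mul_le_mul_right hkey (c i * J * Iw⁻¹ * (mfn M i n x)⁻¹)
      have e1 : c i * J * Iw⁻¹ * (mfn M i n x)⁻¹ * (d (i+1) * mfn M i n x)
          = c i * d (i+1) * (Iw⁻¹ * J) * ((mfn M i n x)⁻¹ * mfn M i n x) := by ring
      have e2 : c i * J * Iw⁻¹ * (mfn M i n x)⁻¹ * ((M i x) Set.univ * Iw)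
          = (mfn M i n x)⁻¹ * (c i * (M i x) Set.univ * J) * (Iw⁻¹ * Iw) := by ring
      rw [e1, e2, ENNReal.inv_mul_cancel (mfnPos i n x).ne' (mfnTop i n x),
        ENNReal.inv_mul_cancel hIw0 hIwtop, mul_one, mul_one] at h2
      exact h2
    have gform : ∀ x, g i x = ∫⁻ y, g (i+1) y ∂(P x) := by
      intro x
      rw [intP x _ (gMeas (i+1))]
      have hpt : ∀ y, mfn M (i+1) n y * g (i+1) y = mfn M (i+1) N y := by
        intro y
        rw [hg]
        simp only
        rw [mul_comm]
        exact ENNReal.div_mul_cancel (mfnPos (i+1) n y).ne' (mfnTop (i+1) n y)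
      rw [lintegral_congr hpt, ← hmNrec x, hg]
      simp only
      rw [ENNReal.div_eq_inv_mul]
    have osc : ∀ x y, g i x - g i y ≤ (1 - c i * d (i+1)) * D (i+1) := by
      intro x y
      haveI := probP x
      haveI := probP y
      haveI := probE
      rw [gform x, gform y]
      exact osc_pair (P x) (P y) E _ hγ1 (minor x) (minor y) (g (i+1)) (gMeas (i+1))
    rw [hD]
    simp only
    rw [tsub_le_iff_right]
    refine iSup_le fun x => ?_
    rw [ENNReal.add_iInf]
    exact le_iInf fun y => tsub_le_iff_right.mp (osc x y)
  -- product chain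
  have chain : ∀ m i, i + m = n → D i ≤ (∏ j ∈ Finset.Ico i n, (1 - c j * d (j+1))) * D n := by
    intro m
    induction m with
    | zero =>
        intro i hi
        have : i = n := by omega
        subst this
        simp [Finset.Ico_self]
    | succ m ih =>
        intro i hi
        have hin : i < n := by omega
        calc D i ≤ (1 - c i * d (i+1)) * D (i+1) := oscstep i hin
          _ ≤ (1 - c i * d (i+1)) * ((∏ j ∈ Finset.Ico (i+1) n, (1 - c j * d (j+1))) * D n) :=
              mul_le_mul_right (ih (i+1) (by omega)) _
          _ = (∏ j ∈ Finset.Ico i n, (1 - c j * d (j+1))) * D n := by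
              rw [Finset.prod_eq_prod_Ico_succ_bot hin]; ring
  set S := ⨆ x, mfn M n N x with hS
  have hDn : D n ≤ S := by
    have hgn : ∀ x, g n x = mfn M n N x := by
      intro x
      rw [hg]
      simp only
      rw [mfn_self, div_one]
    calc D n ≤ ⨆ x, g n x := tsub_le_self
      _ = S := by rw [hS]; exact iSup_congr hgn
  -- step 3 : pointwise bound at level n-1
  have H4 : ∀ x, (c (n-1) * d n) * S * mfn M (n-1) n x ≤ mfn M (n-1) N x := by
    intro x
    have h1 : mfn M (n-1) N x = ∫⁻ y, mfn M n N y ∂(M (n-1) x) := by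
      have h := mfn_rec M (n-1) N x (by omega)
      rwa [hn1] at h
    have h2 : (M (n-1) x) Set.univ = mfn M (n-1) n x := by
      have h := mfn_step M (n-1) x
      rw [hn1] at h
      exact h.symm
    have h3 : d n * S ≤ ∫⁻ y, mfn M n N y ∂(ν (n-1)) := by
      have h := hmaj (n-1) (N - n)
      rwa [hn1] at h
    calc (c (n-1) * d n) * S * mfn M (n-1) n x
        = c (n-1) * mfn M (n-1) n x * (d n * S) := by ring
      _ = c (n-1) * ((M (n-1) x) Set.univ) * (d n * S) := by rw [h2]
      _ ≤ c (n-1) * ((M (n-1) x) Set.univ) * ∫⁻ y, mfn M n N y ∂(ν (n-1)) :=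
          mul_le_mul_right h3 _
      _ ≤ ∫⁻ y, mfn M n N y ∂(M (n-1) x) := hmin (n-1) x _ (mfn_meas M n N)
      _ = mfn M (n-1) N x := h1.symm
  -- masses
  have hUn_eq : ∀ μ : Measure X, (seqApply M k (n - k) μ) Set.univ = ∫⁻ x, mfn M k n x ∂μ :=
    fun μ => mfn_integral M k n μ
  have hUN_eq : ∀ μ : Measure X, (seqApply M k (N - k) μ) Set.univ = ∫⁻ x, mfn M k N x ∂μ :=
    fun μ => mfn_integral M k N μ
  have hUn_pos : ∀ μ : Measure X, μ ≠ 0 → (seqApply M k (n - k) μ) Set.univ ≠ 0 := by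
    intro μ hμ
    rw [hUn_eq]
    refine ((lintegral_pos_iff_support (mfn_meas M k n)).2 ?_).ne'
    have hsupp : Function.support (mfn M k n) = Set.univ :=
      Set.eq_univ_of_forall fun y => Function.mem_support.mpr (mfnPos k n y).ne'
    rw [hsupp]
    exact Measure.measure_univ_pos.mpr hμ
  have hUn_top : ∀ μ : Measure X, IsFiniteMeasure μ → (seqApply M k (n - k) μ) Set.univ ≠ ∞ := by
    intro μ hμ
    rw [hUn_eq]
    obtain ⟨C, hC, hle⟩ := mfn_bdd M hfin k n
    refine ne_of_lt ?_
    calc ∫⁻ x, mfn M k n x ∂μ ≤ ∫⁻ _, C ∂μ := lintegral_mono hle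
      _ = C * μ Set.univ := lintegral_const C
      _ < ∞ := ENNReal.mul_lt_top hC.lt_top (measure_lt_top μ _)
  -- ratio bounds
  have hr_ub : ∀ μ : Measure X, IsFiniteMeasure μ → μ ≠ 0 →
      (seqApply M k (N - k) μ) Set.univ / (seqApply M k (n - k) μ) Set.univ ≤ ⨆ x, g k x := by
    intro μ h1 h2
    rw [ENNReal.div_le_iff_le_mul (Or.inl (hUn_pos μ h2)) (Or.inl (hUn_top μ h1))]
    rw [hUN_eq, hUn_eq, ← lintegral_const_mul _ (mfn_meas M k n)]
    refine lintegral_mono fun x => ?_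
    have hpt : mfn M k N x = g k x * mfn M k n x := by
      rw [hg]
      simp only
      exact (ENNReal.div_mul_cancel (mfnPos k n x).ne' (mfnTop k n x)).symm
    rw [hpt]
    exact mul_le_mul_left (le_iSup (g k) x) _
  have hr_lb : ∀ μ : Measure X, IsFiniteMeasure μ → μ ≠ 0 →
      (⨅ x, g k x) ≤ (seqApply M k (N - k) μ) Set.univ / (seqApply M k (n - k) μ) Set.univ := by
    intro μ h1 h2
    rw [ENNReal.le_div_iff_mul_le (Or.inl (hUn_pos μ h2)) (Or.inl (hUn_top μ h1))]
    rw [hUN_eq, hUn_eq, ← lintegral_const_mul _ (mfn_meas M k n)]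
    refine lintegral_mono fun x => ?_
    have hpt : mfn M k N x = g k x * mfn M k n x := by
      rw [hg]
      simp only
      exact (ENNReal.div_mul_cancel (mfnPos k n x).ne' (mfnTop k n x)).symm
    rw [hpt]
    exact mul_le_mul_left (iInf_le (g k) x) _
  -- step : γ S ≤ r₂
  have H5 : (c (n-1) * d n) * S
      ≤ (seqApply M k (N - k) μ₂) Set.univ / (seqApply M k (n - k) μ₂) Set.univ := by
    rw [ENNReal.le_div_iff_mul_le (Or.inl (hUn_pos μ₂ hne₂)) (Or.inl (hUn_top μ₂ hfm₂))]
    have e1 : (seqApply M k (N - k) μ₂) Set.univ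
        = ∫⁻ x, mfn M (n-1) N x ∂(seqApply M k ((n-1) - k) μ₂) :=
      mfn_integral2 M k (n-1) N (by omega) (by omega) μ₂
    have e2 : (seqApply M k (n - k) μ₂) Set.univ
        = ∫⁻ x, mfn M (n-1) n x ∂(seqApply M k ((n-1) - k) μ₂) :=
      mfn_integral2 M k (n-1) n (by omega) (by omega) μ₂
    rw [e1, e2, ← lintegral_const_mul _ (mfn_meas M (n-1) n)]
    exact lintegral_mono fun x => H4 x
  -- final combination
  set r₁ := (seqApply M k (N - k) μ₁) Set.univ / (seqApply M k (n - k) μ₁) Set.univ with hr₁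
  set r₂ := (seqApply M k (N - k) μ₂) Set.univ / (seqApply M k (n - k) μ₂) Set.univ with hr₂
  set Pr := ∏ i ∈ Finset.Ico k n, (1 - c i * d (i+1)) with hPr
  have hDkS : D k ≤ Pr * S := le_trans (chain (n - k) k (by omega)) (mul_le_mul_right hDn _)
  have hsub : ∀ a b : ℝ≥0∞, a ≤ ⨆ x, g k x → (⨅ x, g k x) ≤ b →
      (c (n-1) * d n) * (a - b) ≤ r₂ * Pr := by
    intro a b ha hb
    have h1 : a - b ≤ D k := tsub_le_tsub ha hb
    calc (c (n-1) * d n) * (a - b) ≤ (c (n-1) * d n) * (Pr * S) :=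
          mul_le_mul_right (h1.trans hDkS) _
      _ = Pr * ((c (n-1) * d n) * S) := by ring
      _ ≤ Pr * r₂ := mul_le_mul_right H5 _
      _ = r₂ * Pr := mul_comm _ _
  have h7 : (c (n-1) * d n) * (r₁ - r₂) ≤ r₂ * Pr :=
    hsub r₁ r₂ (hr_ub μ₁ hfm₁ hne₁) (hr_lb μ₂ hfm₂ hne₂)
  have h8 : (c (n-1) * d n) * (r₂ - r₁) ≤ r₂ * Pr :=
    hsub r₂ r₁ (hr_ub μ₂ hfm₂ hne₂) (hr_lb μ₁ hfm₁ hne₁)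
  calc (c (n-1) * d n) * ((r₁ - r₂) + (r₂ - r₁))
      = (c (n-1) * d n) * (r₁ - r₂) + (c (n-1) * d n) * (r₂ - r₁) := mul_add _ _ _
    _ ≤ r₂ * Pr + r₂ * Pr := add_le_add h7 h8
    _ = 2 * r₂ * Pr := by ring
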